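/- arXiv:2111.03983 — 2 statements merged into one kernel-verified Lean document; each statement's English description precedes it below -/
import Mathlib

section
/- Let (C, ∂, A) be a finite-dimensional filtered Floer-type complex over Λ, and suppose W ⊆ im ∂ is an ε-robust subspace, i.e., every nonzero ζ ∈ W satisfies A(ξ) − A(ζ) > ε for all ξ with ∂ξ = ζ. Then the number of finite bars of length greater than ε in the barcode of C is at least dim_Λ W. -/
open Finset Classical
noncomputable section

/-- The Novikov valuation `ν(λ) = min{a_j : f_j ≠ 0}`. -/
noncomputable def nu {F : Type*} [Field F] (l : HahnSeries ℝ F) : ℝ := l.order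

/-- The action `A(∑ λᵢ xᵢ) = maxᵢ (A(xᵢ) − ν(λᵢ))` on `C = ⊕ᵢ Λ xᵢ`. -/
noncomputable def act {F : Type*} [Field F] {ι : Type*} [Fintype ι]
    (Ax : ι → ℝ) (c : ι → HahnSeries ℝ F) : WithBot ℝ :=
  Finset.univ.sup fun i => if c i = 0 then (⊥ : WithBot ℝ) else ((Ax i - nu (c i) : ℝ) : WithBot ℝ)

/-- `A(λ x) = A(x) − ν(λ)` for `λ ≠ 0`, extended by `A(0) = ⊥`. -/
noncomputable def scaledAct {F : Type*} [Field F] {ι : Type*} [Fintype ι]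
    (Ax : ι → ℝ) (l : HahnSeries ℝ F) (v : ι → HahnSeries ℝ F) : WithBot ℝ :=
  if l = 0 then ⊥ else WithBot.map (fun t => t - nu l) (act Ax v)

/-- Orthogonality of a finite family: `A(∑ λᵢ ξᵢ) = maxᵢ (A(ξᵢ) − ν(λᵢ))`. -/
def Orthogonal {F : Type*} [Field F] {ι : Type*} [Fintype ι] {κ : Type*} [Fintype κ]
    (Ax : ι → ℝ) (ξ : κ → ι → HahnSeries ℝ F) : Prop :=
  ∀ l : κ → HahnSeries ℝ F,
    act Ax (∑ j, l j • ξ j) = Finset.univ.sup fun j => scaledAct Ax (l j) (ξ j)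

/-- The differential `∂` is strictly action-decreasing. -/
def StrictlyActionDecreasing {F : Type*} [Field F] {ι : Type*} [Fintype ι]
    (Ax : ι → ℝ)
    (D : (ι → HahnSeries ℝ F) →ₗ[HahnSeries ℝ F] (ι → HahnSeries ℝ F)) : Prop :=
  ∀ c : ι → HahnSeries ℝ F, c ≠ 0 → act Ax (D c) < act Ax c

/-- A generator `xᵢ` is `ε`-isolated: every nonzero term `f T^a` of a matrix coefficient
`λ_{ij}` of `∂` from or to `xᵢ` gives an arrow of length (action difference)
`A(xᵢ) − A(xⱼ) + a > ε`. -/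
def EpsIsolated {F : Type*} [Field F] {ι : Type*} [Fintype ι]
    (Ax : ι → ℝ)
    (D : (ι → HahnSeries ℝ F) →ₗ[HahnSeries ℝ F] (ι → HahnSeries ℝ F))
    (ε : ℝ) (i : ι) : Prop :=
  (∀ j : ι, ∀ a ∈ (D (Pi.single i 1) j).support, ε < Ax i - Ax j + a) ∧
  (∀ j : ι, ∀ a ∈ (D (Pi.single j 1) i).support, ε < Ax j - Ax i + a)

/-- A singular decomposition of the filtered complex `(C, ∂, A)`: an orthogonal basis
`{αᵢ, ηⱼ, γⱼ}` with `∂αᵢ = 0` and `∂γⱼ = ηⱼ`.  The finite bars of the barcode are the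
action differences `A(γⱼ) − A(ηⱼ)`, and there are `nI = dim_Λ H(C)` infinite bars. -/
structure SingularDecomposition {F : Type*} [Field F] {ι : Type*} [Fintype ι]
    (Ax : ι → ℝ)
    (D : (ι → HahnSeries ℝ F) →ₗ[HahnSeries ℝ F] (ι → HahnSeries ℝ F)) where
  nI : ℕ
  nF : ℕ
  alpha : Fin nI → ι → HahnSeries ℝ F
  eta : Fin nF → ι → HahnSeries ℝ F
  gamma : Fin nF → ι → HahnSeries ℝ F
  indep : LinearIndependent (HahnSeries ℝ F) (Sum.elim alpha (Sum.elim eta gamma))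
  spans : ⊤ ≤ Submodule.span (HahnSeries ℝ F)
      (Set.range (Sum.elim alpha (Sum.elim eta gamma)))
  orth : Orthogonal Ax (Sum.elim alpha (Sum.elim eta gamma))
  d_alpha : ∀ j, D (alpha j) = 0
  d_gamma : ∀ j, D (gamma j) = eta j

/-- The number of bars of length `> ε`: all `nI` infinite bars together with the finite
bars `A(γⱼ) − A(ηⱼ) > ε`. -/
noncomputable def barCount {F : Type*} [Field F] {ι : Type*} [Fintype ι]
    {Ax : ι → ℝ} {D : (ι → HahnSeries ℝ F) →ₗ[HahnSeries ℝ F] (ι → HahnSeries ℝ F)}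
    (SD : SingularDecomposition Ax D) (ε : ℝ) : ℕ :=
  SD.nI + Nat.card {j : Fin SD.nF |
    act Ax (SD.eta j) + ((ε : ℝ) : WithBot ℝ) < act Ax (SD.gamma j)}

lemma act_exists_coe {F : Type*} [Field F] {ι : Type*} [Fintype ι]
    (Ax : ι → ℝ) {c : ι → HahnSeries ℝ F} (hc : c ≠ 0) :
    ∃ r : ℝ, act Ax c = (r : WithBot ℝ) := by
  have h1 : ∃ i, c i ≠ 0 := by
    by_contra h; push_neg at h; exact hc (funext h)
  obtain ⟨i, hi⟩ := h1
  have hle : ((Ax i - nu (c i) : ℝ) : WithBot ℝ) ≤ act Ax c := by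
    have := Finset.le_sup (f := fun i => if c i = 0 then (⊥ : WithBot ℝ)
      else ((Ax i - nu (c i) : ℝ) : WithBot ℝ)) (Finset.mem_univ i)
    simpa [act, hi] using this
  have hne : act Ax c ≠ ⊥ := fun h => by simp [h] at hle
  obtain ⟨r, hr⟩ := WithBot.ne_bot_iff_exists.mp hne
  exact ⟨r, hr.symm⟩

lemma sup_sumtype {α β : Type*} [Fintype α] [Fintype β] {γ : Type*}
    [SemilatticeSup γ] [OrderBot γ] (f : α ⊕ β → γ) :
    Finset.univ.sup f
      = (Finset.univ.sup fun a => f (Sum.inl a)) ⊔ (Finset.univ.sup fun b => f (Sum.inr b)) := by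
  apply le_antisymm
  · refine Finset.sup_le fun k _ => ?_
    cases k with
    | inl a => exact le_sup_of_le_left (Finset.le_sup (f := fun a => f (Sum.inl a)) (Finset.mem_univ a))
    | inr b => exact le_sup_of_le_right (Finset.le_sup (f := fun b => f (Sum.inr b)) (Finset.mem_univ b))
  · exact sup_le (Finset.sup_le fun a _ => Finset.le_sup (Finset.mem_univ _))
      (Finset.sup_le fun b _ => Finset.le_sup (Finset.mem_univ _))

set_option maxHeartbeats 2000000 in
set_option synthInstance.maxHeartbeats 1000000 in
/-- If `W ⊆ im ∂` is an `ε`-robust subspace of a finite-dimensional filtered Floer-type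
complex `(C, ∂, A)` over the Novikov field — i.e. every nonzero `ζ ∈ W` satisfies
`A(ξ) − A(ζ) > ε` for all `ξ` with `∂ξ = ζ` — then the number of finite bars of length
greater than `ε` in the barcode of `C` is at least `dim_Λ W`. -/
theorem finite_bars_ge_dim_robust {F : Type*} [Field F] {ι : Type*} [Fintype ι]
    (Ax : ι → ℝ) (D : (ι → HahnSeries ℝ F) →ₗ[HahnSeries ℝ F] (ι → HahnSeries ℝ F))
    (hD2 : ∀ c, D (D c) = 0) (hdec : StrictlyActionDecreasing Ax D)
    (SD : SingularDecomposition Ax D) (ε : ℝ) (hε : 0 < ε)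
    (W : Submodule (HahnSeries ℝ F) (ι → HahnSeries ℝ F))
    (hW : W ≤ LinearMap.range D)
    (hrobust : ∀ ζ ∈ W, ζ ≠ 0 → ∀ ξ, D ξ = ζ →
      act Ax ζ + ((ε : ℝ) : WithBot ℝ) < act Ax ξ) :
    Module.finrank (HahnSeries ℝ F) W ≤
      Nat.card {j : Fin SD.nF |
        act Ax (SD.eta j) + ((ε : ℝ) : WithBot ℝ) < act Ax (SD.gamma j)} := by
  classical
  set T : Set (Fin SD.nF) := {j : Fin SD.nF |
    act Ax (SD.eta j) + ((ε : ℝ) : WithBot ℝ) < act Ax (SD.gamma j)} with hT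
  let B : Module.Basis (Fin SD.nI ⊕ (Fin SD.nF ⊕ Fin SD.nF)) (HahnSeries ℝ F)
      (ι → HahnSeries ℝ F) := Module.Basis.mk SD.indep SD.spans
  have hBa : ∀ i, B (Sum.inl i) = SD.alpha i := fun i => by simp [B, Module.Basis.mk_apply]
  have hBe : ∀ j, B (Sum.inr (Sum.inl j)) = SD.eta j := fun j => by simp [B, Module.Basis.mk_apply]
  have hBg : ∀ j, B (Sum.inr (Sum.inr j)) = SD.gamma j := fun j => by simp [B, Module.Basis.mk_apply]
  have hDη : ∀ j, D (SD.eta j) = 0 := fun j => by rw [← SD.d_gamma]; exact hD2 _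
  have hη : ∀ j, SD.eta j ≠ 0 := fun j => by
    have := SD.indep.ne_zero (Sum.inr (Sum.inl j)); simpa using this
  have hγ : ∀ j, SD.gamma j ≠ 0 := fun j => by
    have := SD.indep.ne_zero (Sum.inr (Sum.inr j)); simpa using this
  have hbot : ∀ v : ι → HahnSeries ℝ F, scaledAct Ax (0 : HahnSeries ℝ F) v = ⊥ :=
    fun v => if_pos rfl
  have hzs : ∀ v : ι → HahnSeries ℝ F, (0 : HahnSeries ℝ F) • v = 0 :=
    fun v => zero_smul (HahnSeries ℝ F) v
  -- the linear map: coordinates along the long bars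
  let f : W →ₗ[HahnSeries ℝ F] (T → HahnSeries ℝ F) :=
    LinearMap.pi fun j => (Finsupp.lapply (Sum.inr (Sum.inl j.1))) ∘ₗ
      (B.repr.toLinearMap) ∘ₗ W.subtype
  have hker0 : ∀ w : W, f w = 0 → w = 0 := by
    intro w hw
    have hζW : (w : ι → HahnSeries ℝ F) ∈ W := w.2
    obtain ⟨ξ₀, hξ₀⟩ := hW hζW
    set ζ : ι → HahnSeries ℝ F := (w : ι → HahnSeries ℝ F) with hζdef
    set l : Fin SD.nF → HahnSeries ℝ F := fun j => B.repr ξ₀ (Sum.inr (Sum.inr j)) with hl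
    have hζ : ζ = ∑ j, l j • SD.eta j := by
      have h1 : (∑ k, B.repr ξ₀ k • B k) = ξ₀ := B.sum_repr ξ₀
      calc ζ = D ξ₀ := hξ₀.symm
        _ = D (∑ k, B.repr ξ₀ k • B k) := by rw [h1]
        _ = ∑ k, B.repr ξ₀ k • D (B k) := by rw [map_sum]; simp only [map_smul]
        _ = ∑ j, l j • SD.eta j := by
            rw [Fintype.sum_sum_type, Fintype.sum_sum_type]
            simp [hBa, hBe, hBg, SD.d_alpha, hDη, SD.d_gamma, hl]
    have hrepr : ∀ j, B.repr ζ (Sum.inr (Sum.inl j)) = l j := by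
      intro j₀
      have h2 : B.repr ζ = ∑ j, l j • Finsupp.single
          (Sum.inr (Sum.inl j) : Fin SD.nI ⊕ (Fin SD.nF ⊕ Fin SD.nF))
          (1 : HahnSeries ℝ F) := by
        rw [hζ, map_sum]
        refine Finset.sum_congr rfl fun j _ => ?_
        rw [map_smul, ← hBe j, B.repr_self]
      rw [h2]
      simp [Finsupp.finset_sum_apply, Finsupp.single_apply]
    -- coordinates on long bars vanish
    have hl0 : ∀ j, j ∈ T → l j = 0 := by
      intro j hj
      have := congrFun hw ⟨j, hj⟩
      have h' : B.repr (w : ι → HahnSeries ℝ F) (Sum.inr (Sum.inl j)) = 0 := by simpa [f] using this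
      rw [← hrepr j]; exact h'
    -- conclude w = 0 by contradiction
    have hζ0 : ζ = 0 := by
      by_contra hζne
      set ξ : ι → HahnSeries ℝ F := ∑ j, l j • SD.gamma j with hξ
      have hDξ : D ξ = ζ := by
        rw [hξ, map_sum]
        simp only [map_smul, SD.d_gamma]
        exact hζ.symm
      have hrob := hrobust ζ hζW hζne ξ hDξ
      have hζact : act Ax ζ = Finset.univ.sup fun j => scaledAct Ax (l j) (SD.eta j) := by
        have h := SD.orth (Sum.elim 0 (Sum.elim l 0))
        simpa [Fintype.sum_sum_type, sup_sumtype, hbot, hzs, Finset.sum_const_zero, zero_add, add_zero, ← hζ] using h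
      have hξact : act Ax ξ = Finset.univ.sup fun j => scaledAct Ax (l j) (SD.gamma j) := by
        have h := SD.orth (Sum.elim 0 (Sum.elim 0 l))
        simpa [Fintype.sum_sum_type, sup_sumtype, hbot, hzs, Finset.sum_const_zero, zero_add, add_zero, ← hξ] using h
      have hle : act Ax ξ ≤ act Ax ζ + ((ε : ℝ) : WithBot ℝ) := by
        rw [hξact]
        refine Finset.sup_le fun j _ => ?_
        by_cases hlj : l j = 0
        · simp [hlj, hbot]
        · have hjT : j ∉ T := fun hj => hlj (hl0 j hj)
          have hshort : act Ax (SD.gamma j) ≤ act Ax (SD.eta j) + ((ε : ℝ) : WithBot ℝ) := by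
            rw [hT] at hjT
            exact not_lt.mp hjT
          obtain ⟨r, hr⟩ := act_exists_coe Ax (hη j)
          obtain ⟨s, hs⟩ := act_exists_coe Ax (hγ j)
          have hsr : s ≤ r + ε := by
            rw [hr, hs, ← WithBot.coe_add] at hshort
            exact_mod_cast hshort
          have h1 : scaledAct Ax (l j) (SD.gamma j) = ((s - nu (l j) : ℝ) : WithBot ℝ) := by
            simp [scaledAct, hlj, hs]
          have h2 : ((r - nu (l j) : ℝ) : WithBot ℝ) ≤ act Ax ζ := by
            have h3 : scaledAct Ax (l j) (SD.eta j) = ((r - nu (l j) : ℝ) : WithBot ℝ) := by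
              simp [scaledAct, hlj, hr]
            rw [← h3, hζact]
            exact Finset.le_sup (f := fun j => scaledAct Ax (l j) (SD.eta j))
              (Finset.mem_univ j)
          rw [h1]
          calc ((s - nu (l j) : ℝ) : WithBot ℝ)
              ≤ ((r - nu (l j) + ε : ℝ) : WithBot ℝ) := by
                exact_mod_cast (by linarith : s - nu (l j) ≤ r - nu (l j) + ε)
            _ = ((r - nu (l j) : ℝ) : WithBot ℝ) + ((ε : ℝ) : WithBot ℝ) := by
                rw [← WithBot.coe_add]
            _ ≤ act Ax ζ + ((ε : ℝ) : WithBot ℝ) := add_le_add_left h2 _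
      exact absurd (lt_of_lt_of_le hrob hle) (lt_irrefl _)
    exact Subtype.ext hζ0
  have hinj : Function.Injective f :=
    LinearMap.ker_eq_bot.mp (LinearMap.ker_eq_bot'.mpr hker0)
  haveI : Fintype T := Fintype.ofFinite _
  have hfin : Module.finrank (HahnSeries ℝ F) W
      ≤ Module.finrank (HahnSeries ℝ F) (T → HahnSeries ℝ F) :=
    LinearMap.finrank_le_finrank_of_injective hinj
  rw [Module.finrank_pi] at hfin
  rwa [Nat.card_eq_fintype_card]


end
end

section
/- In a finite-dimensional filtered complex (C, ∂, A) over Λ, suppose w_1, …, w_m are orthogonal vectors of the form w_j = x_j + (lower action terms) with the x_j distinct ε-isolated generators. Then any nonzero exact linear combination ζ = ∂ξ' ∈ span(w_1,…,w_m) ∩ im ∂ is ε-robust: A(ξ) − A(ζ) > ε for every ξ with ∂ξ = ζ. -/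
open Finset Classical
noncomputable section

section Helpers
variable {F : Type*} [Field F] {ι : Type*} [Fintype ι]

lemma nu_mul {a b : HahnSeries ℝ F} (ha : a ≠ 0) (hb : b ≠ 0) :
    nu (a * b) = nu a + nu b := HahnSeries.order_mul ha hb

lemma nu_add_eq_left {a b : HahnSeries ℝ F} (ha : a ≠ 0)
    (h : b ≠ 0 → nu a < nu b) : a + b ≠ 0 ∧ nu (a + b) = nu a := by
  by_cases hb : b = 0
  · subst hb; exact ⟨by simpa using ha, by simp⟩
  have hlt : a.order < b.order := h hb
  have hco : (a + b).coeff a.order ≠ 0 := by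
    rw [HahnSeries.coeff_add, HahnSeries.coeff_eq_zero_of_lt_order hlt, add_zero]
    exact HahnSeries.coeff_order_eq_zero.not.mpr ha
  have hne : a + b ≠ 0 := fun h0 => by simp [h0] at hco
  refine ⟨hne, le_antisymm (HahnSeries.order_le_of_coeff_ne_zero hco) ?_⟩
  have := HahnSeries.min_order_le_order_add hne
  rwa [min_eq_left hlt.le] at this

lemma exists_nu_le_sum {κ : Type*} {s : Finset κ} {f : κ → HahnSeries ℝ F}
    (h : ∑ k ∈ s, f k ≠ 0) : ∃ k ∈ s, f k ≠ 0 ∧ nu (f k) ≤ nu (∑ k ∈ s, f k) := by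
  classical
  induction s using Finset.induction_on with
  | empty => simp at h
  | @insert a t ha ih =>
    rw [Finset.sum_insert ha] at h ⊢
    by_cases hfa : f a = 0
    · rw [hfa, zero_add] at h ⊢
      obtain ⟨k, hk, hk0, hkle⟩ := ih h
      exact ⟨k, Finset.mem_insert_of_mem hk, hk0, hkle⟩
    by_cases hS : ∑ k ∈ t, f k = 0
    · rw [hS, add_zero] at h ⊢
      exact ⟨a, Finset.mem_insert_self a t, hfa, le_refl _⟩
    have hmin := HahnSeries.min_order_le_order_add h
    rcases min_cases (f a).order (∑ k ∈ t, f k).order with ⟨heq, _⟩ | ⟨heq, _⟩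
    · exact ⟨a, Finset.mem_insert_self a t, hfa, by rw [nu]; rw [heq] at hmin; exact hmin⟩
    · obtain ⟨k, hk, hk0, hkle⟩ := ih hS
      refine ⟨k, Finset.mem_insert_of_mem hk, hk0, ?_⟩
      rw [heq] at hmin
      exact le_trans hkle hmin

lemma le_act {Ax : ι → ℝ} {c : ι → HahnSeries ℝ F} {i : ι} (h : c i ≠ 0) :
    ((Ax i - nu (c i) : ℝ) : WithBot ℝ) ≤ act Ax c := by
  refine le_trans ?_ (Finset.le_sup (Finset.mem_univ i))
  rw [if_neg h]

lemma act_le_iff {Ax : ι → ℝ} {c : ι → HahnSeries ℝ F} {v : WithBot ℝ} :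
    act Ax c ≤ v ↔ ∀ i, c i ≠ 0 → ((Ax i - nu (c i) : ℝ) : WithBot ℝ) ≤ v := by
  rw [act, Finset.sup_le_iff]
  constructor
  · intro h i hi; have := h i (Finset.mem_univ i); rwa [if_neg hi] at this
  · intro h i _
    split_ifs with hi
    · exact bot_le
    · exact h i hi

lemma act_lt_iff {Ax : ι → ℝ} {c : ι → HahnSeries ℝ F} {v : WithBot ℝ} (hv : ⊥ < v) :
    act Ax c < v ↔ ∀ i, c i ≠ 0 → ((Ax i - nu (c i) : ℝ) : WithBot ℝ) < v := by
  rw [act, Finset.sup_lt_iff hv]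
  constructor
  · intro h i hi; have := h i (Finset.mem_univ i); rwa [if_neg hi] at this
  · intro h i _
    split_ifs with hi
    · exact hv
    · exact h i hi

lemma act_eq_bot_iff {Ax : ι → ℝ} {c : ι → HahnSeries ℝ F} :
    act Ax c = ⊥ ↔ c = 0 := by
  constructor
  · intro h
    funext i
    by_contra hi
    have := le_act (Ax := Ax) hi
    rw [h, le_bot_iff] at this
    exact (WithBot.coe_ne_bot this).elim
  · intro h
    subst h
    rw [eq_bot_iff, act_le_iff]
    intro i hi
    simp at hi

lemma act_smul_lt {Ax : ι → ℝ} {l : HahnSeries ℝ F} (hl : l ≠ 0)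
    {c : ι → HahnSeries ℝ F} {v : ℝ} (hc : act Ax c < ((v : ℝ) : WithBot ℝ)) :
    act Ax (l • c) < ((v - nu l : ℝ) : WithBot ℝ) := by
  rw [act_lt_iff (WithBot.bot_lt_coe _)] at hc ⊢
  intro i hi
  have hci : c i ≠ 0 := by
    intro h0; apply hi; show l * c i = 0; rw [h0, mul_zero]
  have h1 : nu (l • c i) = nu l + nu (c i) := by
    rw [smul_eq_mul, nu_mul hl hci]
  have h2 := hc i hci
  rw [WithBot.coe_lt_coe] at h2 ⊢
  show Ax i - nu (l • c i) < v - nu l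
  rw [h1]; linarith

lemma act_sum_lt {κ : Type*} [Fintype κ] {Ax : ι → ℝ} {f : κ → ι → HahnSeries ℝ F} {v : ℝ}
    (h : ∀ k, act Ax (f k) < ((v : ℝ) : WithBot ℝ)) :
    act Ax (∑ k, f k) < ((v : ℝ) : WithBot ℝ) := by
  rw [act_lt_iff (WithBot.bot_lt_coe _)]
  intro i hi
  rw [Finset.sum_apply] at hi ⊢
  obtain ⟨k, -, hk0, hkle⟩ := exists_nu_le_sum hi
  have := (act_lt_iff (WithBot.bot_lt_coe _)).1 (h k) i hk0
  rw [WithBot.coe_lt_coe] at this ⊢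
  linarith

lemma single_eq_ite (i : ι) :
    (Pi.single i (1 : HahnSeries ℝ F)) = fun j => if i = j then (1 : HahnSeries ℝ F) else 0 := by
  funext j
  by_cases h : j = i
  · subst h; simp
  · rw [Pi.single_eq_of_ne h, if_neg (fun he => h he.symm)]

lemma act_single_add {Ax : ι → ℝ} {i0 : ι} {r : ι → HahnSeries ℝ F}
    (hr : act Ax r < ((Ax i0 : ℝ) : WithBot ℝ)) :
    act Ax (Pi.single i0 1 + r) = ((Ax i0 : ℝ) : WithBot ℝ) := by
  have hr' := (act_lt_iff (WithBot.bot_lt_coe _)).1 hr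
  have hco : ((Pi.single i0 1 + r : ι → HahnSeries ℝ F)) i0 = 1 + r i0 := by simp
  have hkey : (1 : HahnSeries ℝ F) + r i0 ≠ 0 ∧ nu (1 + r i0) = nu (1 : HahnSeries ℝ F) := by
    refine nu_add_eq_left one_ne_zero ?_
    intro hne
    have := hr' i0 hne
    rw [WithBot.coe_lt_coe] at this
    have h1 : nu (1 : HahnSeries ℝ F) = 0 := HahnSeries.order_one
    rw [h1]; linarith
  have h1 : nu (1 : HahnSeries ℝ F) = 0 := HahnSeries.order_one
  refine le_antisymm ?_ ?_
  · rw [act_le_iff]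
    intro i hi
    by_cases hii : i = i0
    · subst hii
      rw [hco, hkey.2, h1, sub_zero]
    · have : ((Pi.single i0 1 + r : ι → HahnSeries ℝ F)) i = r i := by
        simp [Pi.single_eq_of_ne hii]
      rw [this] at hi ⊢
      exact (hr' i hi).le
  · have := le_act (Ax := Ax) (c := Pi.single i0 1 + r) (i := i0) (by rw [hco]; exact hkey.1)
    rwa [hco, hkey.2, h1, sub_zero] at this

end Helpers


/-- Observation (ii): if `w₁, …, w_m` are orthogonal vectors of the form
`wⱼ = x_{jⱼ} + (lower action terms)` with distinct `ε`-isolated leading generators, then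
every nonzero exact vector in their span is `ε`-robust: `A(ξ) − A(ζ) > ε` whenever
`∂ξ = ζ`. -/
theorem span_exact_robust {F : Type*} [Field F] {ι : Type*} [Fintype ι] {m : ℕ}
    (Γ : AddSubgroup ℝ) (Ax : ι → ℝ)
    (D : (ι → HahnSeries ℝ F) →ₗ[HahnSeries ℝ F] (ι → HahnSeries ℝ F))
    (hD2 : ∀ c, D (D c) = 0) (hdec : StrictlyActionDecreasing Ax D)
    -- the generators have pairwise distinct actions modulo `Γ` and `∂` has
    -- matrix coefficients in `Λ^Γ`:
    (hdist : ∀ i j : ι, i ≠ j → Ax i - Ax j ∉ Γ)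
    (hDsupp : ∀ i j : ι, (D (Pi.single i 1) j).support ⊆ (Γ : Set ℝ))
    (ε : ℝ) (x : Fin m → ι) (hx : Function.Injective x)
    (hiso : ∀ j, EpsIsolated Ax D ε (x j))
    (w : Fin m → ι → HahnSeries ℝ F)
    (hw : ∀ j, ∃ r : ι → HahnSeries ℝ F,
      w j = Pi.single (x j) 1 + r ∧ act Ax r < ((Ax (x j) : ℝ) : WithBot ℝ))
    (horth : Orthogonal Ax w) :
    ∀ ζ ∈ Submodule.span (HahnSeries ℝ F) (Set.range w), ζ ∈ LinearMap.range D →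
      ζ ≠ 0 → ∀ ξ, D ξ = ζ → act Ax ζ + ((ε : ℝ) : WithBot ℝ) < act Ax ξ := by
  classical
  intro ζ hζspan _ hζne ξ hξζ
  obtain ⟨l, hl⟩ := (Submodule.mem_span_range_iff_exists_fun (HahnSeries ℝ F)).1 hζspan
  choose r hw1 hw2 using hw
  have hbot : act Ax ζ ≠ ⊥ := fun h => hζne (act_eq_bot_iff.1 h)
  obtain ⟨v, hv⟩ : ∃ v : ℝ, act Ax ζ = ((v : ℝ) : WithBot ℝ) := by
    cases h : act Ax ζ with
    | bot => exact absurd h hbot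
    | coe v => exact ⟨v, rfl⟩
  have hactζ : ((v : ℝ) : WithBot ℝ)
      = Finset.univ.sup fun j => scaledAct Ax (l j) (w j) := by
    rw [← hv, ← hl]; exact horth l
  have hne : (Finset.univ : Finset (Fin m)).Nonempty := by
    rcases (Finset.univ : Finset (Fin m)).eq_empty_or_nonempty with he | h
    · rw [he] at hactζ; simp at hactζ
    · exact h
  obtain ⟨j, -, hj⟩ :=
    Finset.exists_mem_eq_sup Finset.univ hne (fun j => scaledAct Ax (l j) (w j))
  have hjv : scaledAct Ax (l j) (w j) = ((v : ℝ) : WithBot ℝ) := by rw [← hj, ← hactζ]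
  have hlj : l j ≠ 0 := by
    intro h0; rw [scaledAct, if_pos h0] at hjv; exact WithBot.bot_ne_coe hjv
  have hactw : ∀ k, act Ax (w k) = ((Ax (x k) : ℝ) : WithBot ℝ) := by
    intro k; rw [hw1 k]; exact act_single_add (hw2 k)
  have hvj : v = Ax (x j) - nu (l j) := by
    rw [scaledAct, if_neg hlj, hactw j, WithBot.map_coe] at hjv
    exact (WithBot.coe_inj.1 hjv).symm
  have hbound : ∀ k, l k ≠ 0 → Ax (x k) - nu (l k) ≤ v := by
    intro k hk
    have hle : scaledAct Ax (l k) (w k) ≤ ((v : ℝ) : WithBot ℝ) := by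
      rw [hactζ]
      exact Finset.le_sup (f := fun j => scaledAct Ax (l j) (w j)) (Finset.mem_univ k)
    rw [scaledAct, if_neg hk, hactw k, WithBot.map_coe, WithBot.coe_le_coe] at hle
    exact hle
  have hRlt : act Ax (∑ k, l k • r k) < ((v : ℝ) : WithBot ℝ) := by
    apply act_sum_lt
    intro k
    by_cases hk : l k = 0
    · have h0 : l k • r k = 0 := by funext i'; simp [hk]
      rw [h0, show act Ax (0 : ι → HahnSeries ℝ F) = ⊥ from act_eq_bot_iff.2 rfl]
      exact WithBot.bot_lt_coe _
    · refine lt_of_lt_of_le (act_smul_lt hk (hw2 k)) ?_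
      rw [WithBot.coe_le_coe]
      have := hbound k hk; linarith
  have hζcoef : ζ (x j) = l j + (∑ k, l k • r k) (x j) := by
    have hsplit : ∑ k, l k • w k
        = (∑ k, l k • (Pi.single (x k) 1 : ι → HahnSeries ℝ F)) + ∑ k, l k • r k := by
      rw [← Finset.sum_add_distrib]
      exact Finset.sum_congr rfl fun k _ => by rw [hw1 k, smul_add]
    have hmain : (∑ k, l k • (Pi.single (x k) 1 : ι → HahnSeries ℝ F)) (x j) = l j := by
      rw [Finset.sum_apply]
      rw [Finset.sum_eq_single j]
      · simp
      · intro k _ hkj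
        have hxk : x j ≠ x k := fun h => hkj ((hx h).symm)
        simp [Pi.single_eq_of_ne hxk]
      · intro h; exact absurd (Finset.mem_univ j) h
    rw [← hl, hsplit, Pi.add_apply, hmain]
  have hsum_ne : l j + (∑ k, l k • r k) (x j) ≠ 0
      ∧ nu (l j + (∑ k, l k • r k) (x j)) = nu (l j) := by
    apply nu_add_eq_left hlj
    intro hne0
    have hle := le_act (Ax := Ax) (c := ∑ k, l k • r k) (i := x j) hne0
    have hlt := lt_of_le_of_lt hle hRlt
    rw [WithBot.coe_lt_coe, hvj] at hlt
    linarith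
  have hζj_ne : ζ (x j) ≠ 0 := by rw [hζcoef]; exact hsum_ne.1
  have hνζj : nu (ζ (x j)) = nu (l j) := by rw [hζcoef]; exact hsum_ne.2
  have hξexp : ζ (x j) = ∑ i, ξ i * (D (Pi.single i 1)) (x j) := by
    have h1 : ξ = ∑ i, ξ i • (Pi.single i 1 : ι → HahnSeries ℝ F) := by
      conv_lhs => rw [pi_eq_sum_univ ξ]
      exact Finset.sum_congr rfl fun i _ => by rw [single_eq_ite]
    have h2 : D ξ = ∑ i, ξ i • D (Pi.single i 1) := by
      conv_lhs => rw [h1]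
      rw [map_sum]
      exact Finset.sum_congr rfl fun i _ => map_smul D _ _
    rw [← hξζ, h2, Finset.sum_apply]
    exact Finset.sum_congr rfl fun i _ => by rw [Pi.smul_apply, smul_eq_mul]
  obtain ⟨i, -, hi0, hile⟩ := exists_nu_le_sum (s := Finset.univ)
    (f := fun i => ξ i * (D (Pi.single i 1)) (x j)) (by rw [← hξexp]; exact hζj_ne)
  have hξi : ξ i ≠ 0 := left_ne_zero_of_mul hi0
  have hEi : (D (Pi.single i 1)) (x j) ≠ 0 := right_ne_zero_of_mul hi0
  have hile' : nu (ξ i) + nu ((D (Pi.single i 1)) (x j)) ≤ nu (l j) := by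
    rw [← nu_mul hξi hEi, ← hνζj, hξexp]
    exact hile
  have hisol : ε < Ax i - Ax (x j) + nu ((D (Pi.single i 1)) (x j)) := by
    refine (hiso j).2 i _ ?_
    exact HahnSeries.coeff_order_eq_zero.not.mpr hEi
  have hξact := le_act (Ax := Ax) (c := ξ) (i := i) hξi
  have harith : v + ε < Ax i - nu (ξ i) := by rw [hvj]; linarith
  rw [hv, ← WithBot.coe_add]
  exact lt_of_lt_of_le (WithBot.coe_lt_coe.2 harith) hξact

end
end
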